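/- For every n ≥ 1 and every symmetric function f ∈ 𝕊_n, there exist a vector M ∈ ℝ^{4n+2} with all entries in [−1, 1] and a scalar b ∈ ℝ with |b| ≤ n + 1 such that f(x)·(M·v_x + b) ≥ 0.25 for all x ∈ {0,1}^n, where v_x is the hidden-layer embedding under the explicit initialization. -/

import Mathlib

/-- The Hamming weight |x| of x ∈ {0,1}^n. -/
def hw {n : ℕ} (x : Fin n → Bool) : ℕ := (Finset.univ.filter (fun i => x i)).card

/-- The symmetric function f_A : f_A(x) = 1 if |x| ∈ A, and −1 otherwise. -/
def fA {n : ℕ} (A : Finset ℕ) (x : Fin n → Bool) : ℝ := if hw x ∈ A then 1 else -1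

/-- x ∈ {0,1}^n viewed as a real vector. -/
def toR {n : ℕ} (x : Fin n → Bool) : Fin n → ℝ := fun i => if x i then 1 else 0

/-- Explicit initialization of the hidden weights: W⁰_{ij} = (−1)^{i+1} for 1-indexed
i ∈ {1,...,4n+2}; in 0-indexed form W⁰ i j = (−1)^i. -/
def W0 (n : ℕ) : Matrix (Fin (4 * n + 2)) (Fin n) ℝ := fun i _ => (-1 : ℝ) ^ (i : ℕ)

/-- Explicit initialization of the hidden biases: B⁰_i = 0.5·(−1)^i·⌊(i−1)/2⌋ for 1-indexed
i ∈ {1,...,4n+2}; in 0-indexed form B⁰ i = 0.5·(−1)^{i+1}·⌊i/2⌋. -/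
noncomputable def B0 (n : ℕ) : Fin (4 * n + 2) → ℝ :=
  fun i => 0.5 * (-1 : ℝ) ^ ((i : ℕ) + 1) * (((i : ℕ) / 2 : ℕ) : ℝ)

/-- The hidden-layer embedding v_x = ReLU(W⁰x + B⁰) under the explicit initialization. -/
noncomputable def vX (n : ℕ) (x : Fin n → Bool) : Fin (4 * n + 2) → ℝ :=
  fun i => max 0 ((W0 n).mulVec (toR x) i + B0 n i)

/-- Target values: gA A k = 0.25 if k ∈ A, −0.25 otherwise. -/
noncomputable def gA (A : Finset ℕ) (k : ℕ) : ℝ := if k ∈ A then 0.25 else -0.25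

/-- Increments. -/
noncomputable def cA (A : Finset ℕ) (j : ℕ) : ℝ := 2 * (gA A j - gA A (j - 1))

/-- Output weights. -/
noncomputable def Mfun (A : Finset ℕ) (i : ℕ) : ℝ :=
  if i % 4 = 2 then cA A ((i + 2) / 4)
  else if i % 4 = 0 ∧ i ≠ 0 then -(cA A (i / 4)) else 0

/-- n-free version of the hidden embedding. -/
noncomputable def vfun (k i : ℕ) : ℝ :=
  max 0 ((-1 : ℝ) ^ i * k + 0.5 * (-1 : ℝ) ^ (i + 1) * ((i / 2 : ℕ) : ℝ))

lemma gA_abs (A : Finset ℕ) (k : ℕ) : |gA A k| = 0.25 := by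
  unfold gA; split_ifs <;> norm_num

lemma cA_abs (A : Finset ℕ) (j : ℕ) : |cA A j| ≤ 1 := by
  unfold cA gA; split_ifs <;> norm_num

lemma Mfun_abs (A : Finset ℕ) (i : ℕ) : |Mfun A i| ≤ 1 := by
  unfold Mfun
  split_ifs
  · exact cA_abs A _
  · rw [abs_neg]; exact cA_abs A _
  · norm_num

lemma key (A : Finset ℕ) (n : ℕ) :
    ∀ k, ∑ i ∈ Finset.range (4 * n + 2), Mfun A i * vfun k i
      = gA A (min k n) - gA A 0 := by
  induction n with
  | zero =>
    intro k
    have h0 : Mfun A 0 = 0 := by unfold Mfun; norm_num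
    have h1 : Mfun A 1 = 0 := by unfold Mfun; norm_num
    simp [Finset.sum_range_succ, h0, h1]
  | succ n ih =>
    intro k
    have h42 : 4 * (n + 1) + 2 = (4 * n + 2) + 1 + 1 + 1 + 1 := by ring
    rw [h42, Finset.sum_range_succ, Finset.sum_range_succ, Finset.sum_range_succ,
      Finset.sum_range_succ, ih k]
    have m1 : Mfun A (4 * n + 2) = cA A (n + 1) := by
      unfold Mfun
      rw [if_pos (by omega)]
      congr 1; omega
    have m2 : Mfun A (4 * n + 2 + 1) = 0 := by
      unfold Mfun
      rw [if_neg (by omega), if_neg (by intro h; omega)]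
    have m3 : Mfun A (4 * n + 2 + 1 + 1) = -(cA A (n + 1)) := by
      unfold Mfun
      rw [if_neg (by omega), if_pos (by constructor <;> omega)]
      congr 2; omega
    have m4 : Mfun A (4 * n + 2 + 1 + 1 + 1) = 0 := by
      unfold Mfun
      rw [if_neg (by omega), if_neg (by intro h; omega)]
    have hv1 : vfun k (4 * n + 2) = max 0 ((k : ℝ) - (n : ℝ) - 0.5) := by
      unfold vfun
      have he : (-1 : ℝ) ^ (4 * n + 2) = 1 := Even.neg_one_pow ⟨2 * n + 1, by ring⟩
      have ho : (-1 : ℝ) ^ (4 * n + 2 + 1) = -1 := Odd.neg_one_pow ⟨2 * n + 1, by ring⟩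
      have hd : (4 * n + 2) / 2 = 2 * n + 1 := by omega
      rw [he, ho, hd]
      congr 1
      push_cast
      ring
    have hv2 : vfun k (4 * n + 2 + 1 + 1) = max 0 ((k : ℝ) - (n : ℝ) - 1) := by
      unfold vfun
      have he : (-1 : ℝ) ^ (4 * n + 2 + 1 + 1) = 1 := Even.neg_one_pow ⟨2 * n + 2, by ring⟩
      have ho : (-1 : ℝ) ^ (4 * n + 2 + 1 + 1 + 1) = -1 := Odd.neg_one_pow ⟨2 * n + 2, by ring⟩
      have hd : (4 * n + 2 + 1 + 1) / 2 = 2 * n + 2 := by omega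
      rw [he, ho, hd]
      congr 1
      push_cast
      ring
    rw [m1, m2, m3, m4, hv1, hv2]
    rcases le_or_gt (n + 1) k with h | h
    · have hk : (n : ℝ) + 1 ≤ (k : ℝ) := by exact_mod_cast h
      rw [max_eq_right (by linarith), max_eq_right (by linarith)]
      rw [min_eq_right (le_trans (Nat.le_succ n) h), min_eq_right h]
      have hc : cA A (n + 1) = 2 * (gA A (n + 1) - gA A n) := by
        unfold cA; norm_num
      rw [hc]; ring
    · have hk : (k : ℝ) ≤ (n : ℝ) := by exact_mod_cast Nat.lt_succ_iff.mp h
      rw [max_eq_left (by linarith), max_eq_left (by linarith)]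
      rw [min_eq_left (Nat.lt_succ_iff.mp h), min_eq_left (le_of_lt h)]
      ring

lemma vX_eq {n : ℕ} (x : Fin n → Bool) (i : Fin (4 * n + 2)) :
    vX n x i = vfun (hw x) (i : ℕ) := by
  unfold vX vfun W0 B0 hw toR
  congr 1
  simp only [Matrix.mulVec, dotProduct]
  have : ∑ j, (-1 : ℝ) ^ (i : ℕ) * (if x j then (1 : ℝ) else 0)
      = (-1 : ℝ) ^ (i : ℕ) * ((Finset.univ.filter (fun j => x j)).card : ℝ) := by
    rw [← Finset.mul_sum, Finset.sum_boole]
  rw [this]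

theorem stmt10 (n : ℕ) (hn : 1 ≤ n) (f : (Fin n → Bool) → ℝ)
    (hf : ∃ A : Finset ℕ, A ⊆ Finset.range (n + 1) ∧ f = fA A) :
    ∃ (M : Fin (4 * n + 2) → ℝ) (b : ℝ),
      (∀ i, M i ∈ Set.Icc (-1 : ℝ) 1) ∧ |b| ≤ (n : ℝ) + 1 ∧
      ∀ x : Fin n → Bool, 0.25 ≤ f x * ((∑ i, M i * vX n x i) + b) := by
  obtain ⟨A, _, rfl⟩ := hf
  refine ⟨fun i => Mfun A (i : ℕ), gA A 0, ?_, ?_, ?_⟩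
  · intro i
    have := Mfun_abs A (i : ℕ)
    rw [abs_le] at this
    exact ⟨this.1, this.2⟩
  · have h := gA_abs A 0
    have : (0 : ℝ) ≤ n := Nat.cast_nonneg n
    rw [h]; linarith
  · intro x
    have hk : hw x ≤ n := by
      unfold hw
      calc (Finset.univ.filter (fun i => x i)).card ≤ Finset.univ.card :=
            Finset.card_filter_le _ _
        _ = n := Finset.card_fin n
    have hs : ∑ i : Fin (4 * n + 2), Mfun A (i : ℕ) * vX n x i
        = ∑ i ∈ Finset.range (4 * n + 2), Mfun A i * vfun (hw x) i := by
      rw [← Fin.sum_univ_eq_sum_range (fun i => Mfun A i * vfun (hw x) i)]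
      exact Finset.sum_congr rfl (fun i _ => by rw [vX_eq])
    rw [hs, key A n (hw x), min_eq_left hk]
    have : fA A x * gA A (hw x) = 0.25 := by
      unfold fA gA
      split_ifs <;> norm_num
    have heq : gA A (hw x) - gA A 0 + gA A 0 = gA A (hw x) := by ring
    rw [heq, this]
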